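/- On the domain D = {(x¹,x²,y¹,y²) ∈ ℝ⁴ : x¹ + y¹ ≠ 0, x² ≠ 0, y² ≠ 0}, consider Bol's web function f¹ = y²/(x¹ + y¹), f² = x²/(x¹ + y¹), and set σ = (x¹ + y¹)/y², τ = (x¹ + y¹)/x². Then the Jacobian matrices f̄ and f̃ are invertible on D, the connection coefficients are Γ¹₁₁ = Γ²₁₂ = −σ, Γ¹₁₂ = Γ²₂₂ = −τ, Γ¹₂₁ = Γ¹₂₂ = Γ²₁₁ = Γ²₂₁ = 0, and the curvature tensor vanishes identically: b^i_{jkl} = 0 for all i,j,k,l (so the web is a group web). -/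

import Mathlib

noncomputable section

/-- Points of ℝ⁴ with coordinates (x¹, x², y¹, y²). -/
abbrev Pt : Type := ℝ × ℝ × ℝ × ℝ

/-- Partial derivative with respect to x^j (j = 0 ↦ x¹, j = 1 ↦ x²). -/
def pdx (j : Fin 2) (F : Pt → ℝ) (p : Pt) : ℝ :=
  if j = 0 then deriv (fun t => F (t, p.2.1, p.2.2.1, p.2.2.2)) p.1
  else deriv (fun t => F (p.1, t, p.2.2.1, p.2.2.2)) p.2.1

/-- Partial derivative with respect to y^k (k = 0 ↦ y¹, k = 1 ↦ y²). -/
def pdy (k : Fin 2) (F : Pt → ℝ) (p : Pt) : ℝ :=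
  if k = 0 then deriv (fun t => F (p.1, p.2.1, t, p.2.2.2)) p.2.2.1
  else deriv (fun t => F (p.1, p.2.1, p.2.2.1, t)) p.2.2.2

/-- Jacobian matrix f̄ with entries f̄^i_j = ∂f^i/∂x^j. -/
def fbar (f : Fin 2 → Pt → ℝ) (p : Pt) : Matrix (Fin 2) (Fin 2) ℝ :=
  Matrix.of fun i j => pdx j (f i) p

/-- Jacobian matrix f̃ with entries f̃^i_k = ∂f^i/∂y^k. -/
def ftil (f : Fin 2 → Pt → ℝ) (p : Pt) : Matrix (Fin 2) (Fin 2) ℝ :=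
  Matrix.of fun i k => pdy k (f i) p

/-- Connection coefficients Γ^i_{jk} = −Σ_{l,m} (∂²f^i/∂x^l∂y^m) ḡ^l_j g̃^m_k,
where ḡ = f̄⁻¹ and g̃ = f̃⁻¹. -/
def Gam (f : Fin 2 → Pt → ℝ) (i j k : Fin 2) (p : Pt) : ℝ :=
  - ∑ l : Fin 2, ∑ m : Fin 2,
      pdy m (pdx l (f i)) p * (fbar f p)⁻¹ l j * (ftil f p)⁻¹ m k

/-- Torsion tensor a^i_{jk} = (Γ^i_{jk} − Γ^i_{kj})/2. -/
def tors (f : Fin 2 → Pt → ℝ) (i j k : Fin 2) (p : Pt) : ℝ :=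
  (Gam f i j k p - Gam f i k j p) / 2

/-- Curvature tensor b^i_{jkl}. -/
def curv (f : Fin 2 → Pt → ℝ) (i j k l : Fin 2) (p : Pt) : ℝ :=
  (1/2) * ∑ m : Fin 2,
    ( pdx m (Gam f i k l) p * (fbar f p)⁻¹ m j
    + pdx m (Gam f i j l) p * (fbar f p)⁻¹ m k
    - pdy m (Gam f i k j) p * (ftil f p)⁻¹ m l
    - pdy m (Gam f i k l) p * (ftil f p)⁻¹ m j
    + Gam f m j l p * Gam f i k m p
    - Gam f m k j p * Gam f i m l p
    + 2 * Gam f m k l p * tors f i m j p )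

/-- Bol's web function: f¹ = y²/(x¹ + y¹), f² = x²/(x¹ + y¹). -/
def w : Fin 2 → Pt → ℝ :=
  ![fun p => p.2.2.2 / (p.1 + p.2.2.1), fun p => p.2.1 / (p.1 + p.2.2.1)]

open Filter in
lemma eventually_add_ne (a b : ℝ) (h : a + b ≠ 0) : ∀ᶠ t in nhds b, a + t ≠ 0 :=
  ((continuous_const.add continuous_id).continuousAt).eventually_ne h

open Filter in
lemma eventually_add_ne' (a b : ℝ) (h : b + a ≠ 0) : ∀ᶠ t in nhds b, t + a ≠ 0 :=
  ((continuous_id.add continuous_const).continuousAt).eventually_ne h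

open Filter in
lemma eventually_ne_zero (b : ℝ) (h : b ≠ 0) : ∀ᶠ t in nhds b, t ≠ 0 :=
  continuous_id.continuousAt.eventually_ne h

lemma hd_div_add (c a t : ℝ) (h : t + a ≠ 0) :
    HasDerivAt (fun s => c / (s + a)) (-c / (t + a) ^ 2) t := by
  have h1 : HasDerivAt (fun s : ℝ => s + a) 1 t := (hasDerivAt_id t).add_const a
  have := (hasDerivAt_const t c).fun_div h1 h
  refine this.congr_deriv ?_
  simp

lemma hd_add_div (c a t : ℝ) (h : a + t ≠ 0) :
    HasDerivAt (fun s => c / (a + s)) (-c / (a + t) ^ 2) t := by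
  have h1 : HasDerivAt (fun s : ℝ => a + s) 1 t := (hasDerivAt_id t).const_add a
  have := (hasDerivAt_const t c).fun_div h1 h
  refine this.congr_deriv ?_
  simp

lemma hd_div_t (c t : ℝ) (h : t ≠ 0) :
    HasDerivAt (fun s => c / s) (-c / t ^ 2) t := by
  have := (hasDerivAt_const t c).fun_div (hasDerivAt_id t) h
  refine this.congr_deriv ?_
  simp

lemma hd_div_sq (c a t : ℝ) (h : a + t ≠ 0) :
    HasDerivAt (fun s => c / (a + s) ^ 2) (-2 * c / (a + t) ^ 3) t := by
  have h1 : HasDerivAt (fun s : ℝ => (a + s) ^ 2) ((2 : ℕ) * (a + t) ^ 1 * 1) t :=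
    ((hasDerivAt_id t).const_add a).pow 2
  have := (hasDerivAt_const t c).fun_div h1 (pow_ne_zero 2 h)
  refine this.congr_deriv ?_
  field_simp
  ring

lemma pdx_w (i l : Fin 2) (x1 x2 y1 y2 : ℝ) (h : x1 + y1 ≠ 0) :
    pdx l (w i) (x1, x2, y1, y2) =
      ![![-y2 / (x1 + y1) ^ 2, 0], ![-x2 / (x1 + y1) ^ 2, 1 / (x1 + y1)]] i l := by
  fin_cases i <;> fin_cases l <;> simp [pdx, w]
  · exact (hd_div_add y2 y1 x1 h).deriv
  · exact (hd_div_add x2 y1 x1 h).deriv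

lemma pdy_w (i m : Fin 2) (x1 x2 y1 y2 : ℝ) (h : x1 + y1 ≠ 0) :
    pdy m (w i) (x1, x2, y1, y2) =
      ![![-y2 / (x1 + y1) ^ 2, 1 / (x1 + y1)], ![-x2 / (x1 + y1) ^ 2, 0]] i m := by
  fin_cases i <;> fin_cases m <;> simp [pdy, w]
  · exact (hd_add_div y2 x1 y1 h).deriv
  · exact (hd_add_div x2 x1 y1 h).deriv

lemma fbar_w (x1 x2 y1 y2 : ℝ) (h : x1 + y1 ≠ 0) :
    fbar w (x1, x2, y1, y2) =
      !![-y2 / (x1 + y1) ^ 2, 0; -x2 / (x1 + y1) ^ 2, 1 / (x1 + y1)] := by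
  ext i j
  rw [show fbar w (x1, x2, y1, y2) i j = pdx j (w i) (x1, x2, y1, y2) from rfl,
    pdx_w i j x1 x2 y1 y2 h]
  fin_cases i <;> fin_cases j <;> simp

lemma ftil_w (x1 x2 y1 y2 : ℝ) (h : x1 + y1 ≠ 0) :
    ftil w (x1, x2, y1, y2) =
      !![-y2 / (x1 + y1) ^ 2, 1 / (x1 + y1); -x2 / (x1 + y1) ^ 2, 0] := by
  ext i j
  rw [show ftil w (x1, x2, y1, y2) i j = pdy j (w i) (x1, x2, y1, y2) from rfl,
    pdy_w i j x1 x2 y1 y2 h]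
  fin_cases i <;> fin_cases j <;> simp

lemma gbar_w (x1 x2 y1 y2 : ℝ) (h1 : x1 + y1 ≠ 0) (h3 : y2 ≠ 0) :
    (fbar w (x1, x2, y1, y2))⁻¹ =
      !![-(x1 + y1) ^ 2 / y2, 0; -x2 * (x1 + y1) / y2, x1 + y1] := by
  rw [fbar_w x1 x2 y1 y2 h1]
  apply Matrix.inv_eq_right_inv
  ext i j
  fin_cases i <;> fin_cases j <;>
    (simp [Matrix.mul_apply, Fin.sum_univ_two]; try field_simp; try ring)

lemma gtil_w (x1 x2 y1 y2 : ℝ) (h1 : x1 + y1 ≠ 0) (h2 : x2 ≠ 0) :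
    (ftil w (x1, x2, y1, y2))⁻¹ =
      !![0, -(x1 + y1) ^ 2 / x2; x1 + y1, -y2 * (x1 + y1) / x2] := by
  rw [ftil_w x1 x2 y1 y2 h1]
  apply Matrix.inv_eq_right_inv
  ext i j
  fin_cases i <;> fin_cases j <;>
    (simp [Matrix.mul_apply, Fin.sum_univ_two]; try field_simp; try ring)

lemma isUnit_fbar_w (x1 x2 y1 y2 : ℝ) (h1 : x1 + y1 ≠ 0) (h3 : y2 ≠ 0) :
    IsUnit (fbar w (x1, x2, y1, y2)) := by
  rw [Matrix.isUnit_iff_isUnit_det, fbar_w x1 x2 y1 y2 h1, Matrix.det_fin_two_of,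
    isUnit_iff_ne_zero]
  intro hc
  apply h3
  field_simp at hc
  simpa using hc

lemma isUnit_ftil_w (x1 x2 y1 y2 : ℝ) (h1 : x1 + y1 ≠ 0) (h2 : x2 ≠ 0) :
    IsUnit (ftil w (x1, x2, y1, y2)) := by
  rw [Matrix.isUnit_iff_isUnit_det, ftil_w x1 x2 y1 y2 h1, Matrix.det_fin_two_of,
    isUnit_iff_ne_zero]
  intro hc
  apply h2
  field_simp at hc
  simpa using hc

open Filter in
lemma d2w (i l m : Fin 2) (x1 x2 y1 y2 : ℝ) (h : x1 + y1 ≠ 0) :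
    pdy m (pdx l (w i)) (x1, x2, y1, y2) =
      ![![![2 * y2 / (x1 + y1) ^ 3, -1 / (x1 + y1) ^ 2], ![0, 0]],
        ![![2 * x2 / (x1 + y1) ^ 3, 0], ![-1 / (x1 + y1) ^ 2, 0]]] i l m := by
  have hev := eventually_add_ne x1 y1 h
  fin_cases i <;> fin_cases l <;> fin_cases m <;> simp only [pdy, Fin.zero_eta, Fin.mk_one]
  · -- i=0 l=0 m=0 : d/dy1 of (-y2/(x1+t)^2) = 2 y2 / s^3
    have heq : (fun t => pdx 0 (w 0) (x1, x2, t, y2)) =ᶠ[nhds y1]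
        fun t => -y2 / (x1 + t) ^ 2 :=
      hev.mono fun t ht => by simp [pdx_w 0 0 x1 x2 t y2 ht]
    rw [if_pos trivial, heq.deriv_eq, (hd_div_sq (-y2) x1 y1 h).deriv]
    simp
    try ring
  · -- i=0 l=0 m=1 : d/dy2 of (-t/(x1+y1)^2) = -1/s^2
    have heq : (fun t => pdx 0 (w 0) (x1, x2, y1, t)) =
        fun t => -t / (x1 + y1) ^ 2 := by
      funext t
      rw [pdx_w 0 0 x1 x2 y1 t h]; norm_num
    rw [if_neg (show ¬((1:Fin 2) = 0) by decide), heq,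
      (((hasDerivAt_neg y2).div_const ((x1 + y1) ^ 2))).deriv]
    simp
  · -- i=0 l=1 m=0 : zero
    have heq : (fun t => pdx 1 (w 0) (x1, x2, t, y2)) =ᶠ[nhds y1]
        fun _ => (0 : ℝ) :=
      hev.mono fun t ht => by simp [pdx_w 0 1 x1 x2 t y2 ht]
    rw [if_pos trivial, heq.deriv_eq]
    simp
  · -- i=0 l=1 m=1 : zero
    have heq : (fun t => pdx 1 (w 0) (x1, x2, y1, t)) = fun _ => (0 : ℝ) := by
      funext t
      rw [pdx_w 0 1 x1 x2 y1 t h]; norm_num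
    rw [if_neg (show ¬((1:Fin 2) = 0) by decide), heq]
    simp
  · -- i=1 l=0 m=0 : d/dy1 of (-x2/(x1+t)^2) = 2 x2 / s^3
    have heq : (fun t => pdx 0 (w 1) (x1, x2, t, y2)) =ᶠ[nhds y1]
        fun t => -x2 / (x1 + t) ^ 2 :=
      hev.mono fun t ht => by simp [pdx_w 1 0 x1 x2 t y2 ht]
    rw [if_pos trivial, heq.deriv_eq, (hd_div_sq (-x2) x1 y1 h).deriv]
    simp
    try ring
  · -- i=1 l=0 m=1 : const
    have heq : (fun t => pdx 0 (w 1) (x1, x2, y1, t)) =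
        fun _ => -x2 / (x1 + y1) ^ 2 := by
      funext t
      rw [pdx_w 1 0 x1 x2 y1 t h]; norm_num
    rw [if_neg (show ¬((1:Fin 2) = 0) by decide), heq]
    simp
  · -- i=1 l=1 m=0 : d/dy1 of 1/(x1+t) = -1/s^2
    have heq : (fun t => pdx 1 (w 1) (x1, x2, t, y2)) =ᶠ[nhds y1]
        fun t => 1 / (x1 + t) :=
      hev.mono fun t ht => by simp [pdx_w 1 1 x1 x2 t y2 ht]
    rw [if_pos trivial, heq.deriv_eq, (hd_add_div 1 x1 y1 h).deriv]
    simp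
  · -- i=1 l=1 m=1 : const
    have heq : (fun t => pdx 1 (w 1) (x1, x2, y1, t)) =
        fun _ => 1 / (x1 + y1) := by
      funext t
      rw [pdx_w 1 1 x1 x2 y1 t h]; norm_num
    rw [if_neg (show ¬((1:Fin 2) = 0) by decide), heq]
    simp

/-- Closed form of the connection coefficients of Bol's web. -/
def Gv (i j k : Fin 2) (x1 x2 y1 y2 : ℝ) : ℝ :=
  ![![![-((x1 + y1) / y2), -((x1 + y1) / x2)], ![0, 0]],
    ![![0, -((x1 + y1) / y2)], ![0, -((x1 + y1) / x2)]]] i j k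

lemma Gam_w (i j k : Fin 2) (x1 x2 y1 y2 : ℝ) (h1 : x1 + y1 ≠ 0)
    (h2 : x2 ≠ 0) (h3 : y2 ≠ 0) :
    Gam w i j k (x1, x2, y1, y2) = Gv i j k x1 x2 y1 y2 := by
  fin_cases i <;> fin_cases j <;> fin_cases k <;>
    (simp only [Gam, Fin.sum_univ_two, Fin.zero_eta, Fin.mk_one, gbar_w x1 x2 y1 y2 h1 h3,
      gtil_w x1 x2 y1 y2 h1 h2,
      d2w 0 0 0 x1 x2 y1 y2 h1, d2w 0 0 1 x1 x2 y1 y2 h1,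
      d2w 0 1 0 x1 x2 y1 y2 h1, d2w 0 1 1 x1 x2 y1 y2 h1,
      d2w 1 0 0 x1 x2 y1 y2 h1, d2w 1 0 1 x1 x2 y1 y2 h1,
      d2w 1 1 0 x1 x2 y1 y2 h1, d2w 1 1 1 x1 x2 y1 y2 h1]
     simp [Gv]
     try field_simp
     try ring)

lemma deriv_negdiv1 (a c t : ℝ) : deriv (fun s => -((s + a) / c)) t = -(1 / c) :=
  ((((hasDerivAt_id' t).add_const a).div_const c).neg).deriv

lemma deriv_negdiv2 (a c t : ℝ) : deriv (fun s => -((a + s) / c)) t = -(1 / c) :=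
  ((((hasDerivAt_id' t).const_add a).div_const c).neg).deriv

lemma deriv_negdiv3 (a t : ℝ) (h : t ≠ 0) :
    deriv (fun s => -(a / s)) t = a / t ^ 2 := by
  have h1 : (fun s : ℝ => -(a / s)) = fun s => (-a) / s := by funext s; ring
  rw [h1, (hd_div_t (-a) t h).deriv]
  ring

open Filter in
lemma pdx_Gam (m i j k : Fin 2) (x1 x2 y1 y2 : ℝ) (h1 : x1 + y1 ≠ 0)
    (h2 : x2 ≠ 0) (h3 : y2 ≠ 0) :
    pdx m (Gam w i j k) (x1, x2, y1, y2) =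
      ![![![![-(1 / y2), -(1 / x2)], ![0, 0]], ![![0, -(1 / y2)], ![0, -(1 / x2)]]],
        ![![![0, (x1 + y1) / x2 ^ 2], ![0, 0]],
          ![![0, 0], ![0, (x1 + y1) / x2 ^ 2]]]] m i j k := by
  fin_cases m
  · have heq : (fun t => Gam w i j k (t, x2, y1, y2)) =ᶠ[nhds x1]
        (fun t => Gv i j k t x2 y1 y2) :=
      (eventually_add_ne' y1 x1 h1).mono fun t ht => Gam_w i j k t x2 y1 y2 ht h2 h3
    simp only [pdx, Fin.zero_eta, Fin.mk_one]
    rw [if_pos trivial, heq.deriv_eq]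
    fin_cases i <;> fin_cases j <;> fin_cases k <;>
      simp only [Gv, Fin.zero_eta, Fin.mk_one, Matrix.cons_val_zero,
        Matrix.cons_val_one, Matrix.head_cons] <;>
      first
        | rw [deriv_negdiv1]
        | simp
  · have heq : (fun t => Gam w i j k (x1, t, y1, y2)) =ᶠ[nhds x2]
        (fun t => Gv i j k x1 t y1 y2) :=
      (eventually_ne_zero x2 h2).mono fun t ht => Gam_w i j k x1 t y1 y2 h1 ht h3
    simp only [pdx, Fin.zero_eta, Fin.mk_one]
    rw [if_neg (show ¬((1 : Fin 2) = 0) by decide), heq.deriv_eq]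
    fin_cases i <;> fin_cases j <;> fin_cases k <;>
      simp only [Gv, Fin.zero_eta, Fin.mk_one, Matrix.cons_val_zero,
        Matrix.cons_val_one, Matrix.head_cons] <;>
      first
        | rw [deriv_negdiv3 _ _ h2]
        | simp

open Filter in
lemma pdy_Gam (m i j k : Fin 2) (x1 x2 y1 y2 : ℝ) (h1 : x1 + y1 ≠ 0)
    (h2 : x2 ≠ 0) (h3 : y2 ≠ 0) :
    pdy m (Gam w i j k) (x1, x2, y1, y2) =
      ![![![![-(1 / y2), -(1 / x2)], ![0, 0]], ![![0, -(1 / y2)], ![0, -(1 / x2)]]],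
        ![![![(x1 + y1) / y2 ^ 2, 0], ![0, 0]],
          ![![0, (x1 + y1) / y2 ^ 2], ![0, 0]]]] m i j k := by
  fin_cases m
  · have heq : (fun t => Gam w i j k (x1, x2, t, y2)) =ᶠ[nhds y1]
        (fun t => Gv i j k x1 x2 t y2) :=
      (eventually_add_ne x1 y1 h1).mono fun t ht => Gam_w i j k x1 x2 t y2 ht h2 h3
    simp only [pdy, Fin.zero_eta, Fin.mk_one]
    rw [if_pos trivial, heq.deriv_eq]
    fin_cases i <;> fin_cases j <;> fin_cases k <;>
      simp only [Gv, Fin.zero_eta, Fin.mk_one, Matrix.cons_val_zero,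
        Matrix.cons_val_one, Matrix.head_cons] <;>
      first
        | rw [deriv_negdiv2]
        | simp
  · have heq : (fun t => Gam w i j k (x1, x2, y1, t)) =ᶠ[nhds y2]
        (fun t => Gv i j k x1 x2 y1 t) :=
      (eventually_ne_zero y2 h3).mono fun t ht => Gam_w i j k x1 x2 y1 t h1 h2 ht
    simp only [pdy, Fin.zero_eta, Fin.mk_one]
    rw [if_neg (show ¬((1 : Fin 2) = 0) by decide), heq.deriv_eq]
    fin_cases i <;> fin_cases j <;> fin_cases k <;>
      simp only [Gv, Fin.zero_eta, Fin.mk_one, Matrix.cons_val_zero,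
        Matrix.cons_val_one, Matrix.head_cons] <;>
      first
        | rw [deriv_negdiv3 _ _ h3]
        | simp

set_option maxHeartbeats 4000000 in
theorem stmt_9 (x1 x2 y1 y2 : ℝ) (h1 : x1 + y1 ≠ 0) (h2 : x2 ≠ 0) (h3 : y2 ≠ 0) :
    IsUnit (fbar w (x1, x2, y1, y2)) ∧
    IsUnit (ftil w (x1, x2, y1, y2)) ∧
    Gam w 0 0 0 (x1, x2, y1, y2) = -((x1 + y1) / y2) ∧
    Gam w 1 0 1 (x1, x2, y1, y2) = -((x1 + y1) / y2) ∧
    Gam w 0 0 1 (x1, x2, y1, y2) = -((x1 + y1) / x2) ∧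
    Gam w 1 1 1 (x1, x2, y1, y2) = -((x1 + y1) / x2) ∧
    Gam w 0 1 0 (x1, x2, y1, y2) = 0 ∧
    Gam w 0 1 1 (x1, x2, y1, y2) = 0 ∧
    Gam w 1 0 0 (x1, x2, y1, y2) = 0 ∧
    Gam w 1 1 0 (x1, x2, y1, y2) = 0 ∧
    (∀ i j k l : Fin 2, curv w i j k l (x1, x2, y1, y2) = 0) := by
  refine ⟨isUnit_fbar_w x1 x2 y1 y2 h1 h3, isUnit_ftil_w x1 x2 y1 y2 h1 h2,
    ?_, ?_, ?_, ?_, ?_, ?_, ?_, ?_, ?_⟩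
  · rw [Gam_w 0 0 0 x1 x2 y1 y2 h1 h2 h3]; simp [Gv]
  · rw [Gam_w 1 0 1 x1 x2 y1 y2 h1 h2 h3]; simp [Gv]
  · rw [Gam_w 0 0 1 x1 x2 y1 y2 h1 h2 h3]; simp [Gv]
  · rw [Gam_w 1 1 1 x1 x2 y1 y2 h1 h2 h3]; simp [Gv]
  · rw [Gam_w 0 1 0 x1 x2 y1 y2 h1 h2 h3]; simp [Gv]
  · rw [Gam_w 0 1 1 x1 x2 y1 y2 h1 h2 h3]; simp [Gv]
  · rw [Gam_w 1 0 0 x1 x2 y1 y2 h1 h2 h3]; simp [Gv]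
  · rw [Gam_w 1 1 0 x1 x2 y1 y2 h1 h2 h3]; simp [Gv]
  · intro i j k l
    fin_cases i <;> fin_cases j <;> fin_cases k <;> fin_cases l <;>
      · simp only [curv, tors, Fin.sum_univ_two, Fin.zero_eta, Fin.mk_one,
          fun m i j k => pdx_Gam m i j k x1 x2 y1 y2 h1 h2 h3,
          fun m i j k => pdy_Gam m i j k x1 x2 y1 y2 h1 h2 h3,
          fun i j k => Gam_w i j k x1 x2 y1 y2 h1 h2 h3,
          gbar_w x1 x2 y1 y2 h1 h3, gtil_w x1 x2 y1 y2 h1 h2, Gv,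
          Matrix.cons_val_zero, Matrix.cons_val_one, Matrix.head_cons,
          Matrix.cons_val', Matrix.empty_val', Matrix.cons_val_fin_one,
          Matrix.of_apply]
        field_simp
        try ring
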